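/- Let κ > 0 and θ₀ > 0 be constants, let ψ : [0,∞) → ℝ be continuous and bounded, and let α : [0,∞) → ℝ be differentiable with ψ(t) + α(t) ≠ 0 for all t ≥ 0 and α̇(t) = 2θ₀/(ψ(t) + α(t)) − κ·α(t). Then α(t) does not tend to −∞ as t → ∞. -/

import Mathlib

open Set Filter

/-- Under the adaptive update law `α̇ = 2θ₀/(ψ + α) − κα` with `κ, θ₀ > 0`, `ψ` continuous
and bounded on `[0,∞)`, and `ψ + α ≠ 0`, the function `α` does not tend to `−∞`. -/
theorem adaptive_law_not_tendsto_atBot (κ θ₀ : ℝ) (hκ : 0 < κ) (hθ : 0 < θ₀)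
    (ψ α : ℝ → ℝ)
    (hψc : ContinuousOn ψ (Ici 0))
    (hψbdd : ∃ C : ℝ, ∀ t ∈ Ici (0 : ℝ), |ψ t| ≤ C)
    (hne : ∀ t ∈ Ici (0 : ℝ), ψ t + α t ≠ 0)
    (hα : ∀ t ∈ Ici (0 : ℝ),
      HasDerivAt α (2 * θ₀ / (ψ t + α t) - κ * α t) t) :
    ¬ Tendsto α atTop atBot := by
  intro htend
  obtain ⟨C, hC⟩ := hψbdd
  set M : ℝ := max (C + 2 * θ₀) (2 / κ) with hM
  -- eventually α t ≤ -M
  have hev : ∀ᶠ t in atTop, α t ≤ -M := htend.eventually (eventually_le_atBot (-M))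
  obtain ⟨T0, hT0⟩ := hev.exists_forall_of_atTop
  set T : ℝ := max T0 0 with hT
  have hT0le : (0:ℝ) ≤ T := le_max_right _ _
  have hsub : Ici T ⊆ Ici (0:ℝ) := fun x hx => le_trans hT0le hx
  -- derivative positive on Ici T
  have hderivpos : ∀ t ∈ Ici T, 0 < 2 * θ₀ / (ψ t + α t) - κ * α t := by
    intro t ht
    have ht0 : t ∈ Ici (0:ℝ) := hsub ht
    have hαle : α t ≤ -M := hT0 t (le_trans (le_max_left _ _) ht)
    have h1 : ψ t + α t ≤ -(2 * θ₀) := by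
      have := hC t ht0
      have hψle : ψ t ≤ C := (abs_le.mp this).2
      have : α t ≤ -(C + 2 * θ₀) := le_trans hαle (neg_le_neg (le_max_left _ _))
      linarith
    have hneg : ψ t + α t < 0 := lt_of_le_of_lt h1 (by linarith)
    have hq : (-1 : ℝ) ≤ 2 * θ₀ / (ψ t + α t) := by
      rw [le_div_iff_of_neg hneg]
      linarith
    have h2 : 2 ≤ -(κ * α t) := by
      have : α t ≤ -(2 / κ) := le_trans hαle (neg_le_neg (le_max_right _ _))
      have := mul_le_mul_of_nonneg_left this (le_of_lt hκ)
      rw [mul_neg, mul_div_cancel₀ _ (ne_of_gt hκ)] at this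
      linarith
    linarith
  -- α strict mono on Ici T
  have hmono : StrictMonoOn α (Ici T) := by
    apply strictMonoOn_of_deriv_pos (convex_Ici T)
    · intro t ht
      exact (hα t (hsub ht)).continuousAt.continuousWithinAt
    · intro t ht
      rw [interior_Ici] at ht
      have ht' : t ∈ Ici T := Set.mem_Ici.mpr (le_of_lt (Set.mem_Ioi.mp ht))
      rw [(hα t (hsub ht')).deriv]
      exact hderivpos t ht'
  -- contradiction
  have hev2 : ∀ᶠ t in atTop, α t < α T := htend.eventually (eventually_lt_atBot (α T))
  obtain ⟨t, ht1, ht2⟩ := (hev2.and (eventually_gt_atTop T)).exists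
  exact absurd (hmono (le_refl T) (le_of_lt ht2) ht2) (not_lt.mpr (le_of_lt ht1))
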